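/- Suppose S : Δ → ℝ³ is a strictly proper scoring rule satisfying the technical assumptions and the budget-constrained truthfulness property. Then there exist probability distributions p, q, q₀, p', q₀' ∈ Δ and budgets b, b' > 0 such that: (1) q = ½p + ½q₀, q is the maximizer of p·S(·) over {q'' : nb(q₀, q'') ≤ b}, S_X(q₀) − S_X(q) = b, S_Y(q₀) − S_Y(q) < b, and S_Z(q₀) − S_Z(q) < b; (2) q = ½p' + ½q₀', q is the maximizer of p'·S(·) over {q'' : nb(q₀', q'') ≤ b'}, S_X(q₀') − S_X(q) = b', S_Y(q₀') − S_Y(q) < b', and S_Z(q₀') − S_Z(q) < b'; and (3) p_Y / p_Z ≠ p'_Y / p'_Z. -/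

import Mathlib

open scoped BigOperators

noncomputable section

/-- The probability simplex over the three outcomes `X, Y, Z` (identified with `0, 1, 2`). -/
def simplex3 : Set (Fin 3 → ℝ) := {q | (∀ i, 0 ≤ q i) ∧ ∑ i, q i = 1}

/-- The relative interior of the simplex: all coordinates strictly positive. -/
def relint3 : Set (Fin 3 → ℝ) := {q | (∀ i, 0 < q i) ∧ ∑ i, q i = 1}

/-- Dot product of two vectors in `ℝ³`. -/
def dot3 (p s : Fin 3 → ℝ) : ℝ := ∑ i, p i * s i

/-- A scoring rule `S : Δ → ℝ³` is strictly proper if for all `p ≠ q` in the simplex,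
`p·S(p) > p·S(q)`. -/
def StrictlyProper3 (S : (Fin 3 → ℝ) → Fin 3 → ℝ) : Prop :=
  ∀ p ∈ simplex3, ∀ q ∈ simplex3, p ≠ q → dot3 p (S q) < dot3 p (S p)

/-- Each component `S_i` is quasiconcave: `S_i(½p + ½q) ≥ min (S_i p) (S_i q)`, with equality
only if `S_i p = S_i q`. -/
def QuasiConcave3 (S : (Fin 3 → ℝ) → Fin 3 → ℝ) : Prop :=
  ∀ i : Fin 3, ∀ p ∈ simplex3, ∀ q ∈ simplex3,
    min (S p i) (S q i) ≤ S ((1/2 : ℝ) • p + (1/2 : ℝ) • q) i ∧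
    (S ((1/2 : ℝ) • p + (1/2 : ℝ) • q) i = min (S p i) (S q i) → S p i = S q i)

/-- The technical assumptions: continuity on the simplex, differentiability on its relative
interior, and componentwise quasiconcavity. -/
def Tech3 (S : (Fin 3 → ℝ) → Fin 3 → ℝ) : Prop :=
  ContinuousOn S simplex3 ∧ DifferentiableOn ℝ S relint3 ∧ QuasiConcave3 S

/-- The natural budget required to move from `q₀` to `q`: the worst-case loss
`max_i (S_i(q₀) − S_i(q))`. -/
def nb3 (S : (Fin 3 → ℝ) → Fin 3 → ℝ) (q₀ q : Fin 3 → ℝ) : ℝ :=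
  max (S q₀ 0 - S q 0) (max (S q₀ 1 - S q 1) (S q₀ 2 - S q 2))

/-- The budget-constrained truthfulness property: for every belief `p`, reference point `q₀`
and budget `b > 0`, the expected score `p·S(q)` over feasible reports (`q ∈ Δ` with
`nb(q₀,q) ≤ b`) is uniquely maximized at `q* = α p + (1−α) q₀`, where `α` is the largest
element of `{α ∈ [0,1] : nb(q₀, α p + (1−α) q₀) ≤ b}`. -/
def BCT3 (S : (Fin 3 → ℝ) → Fin 3 → ℝ) : Prop :=
  ∀ p ∈ simplex3, ∀ q₀ ∈ simplex3, ∀ b : ℝ, 0 < b →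
    ∃ α : ℝ,
      IsGreatest {a : ℝ | a ∈ Set.Icc (0:ℝ) 1 ∧
        nb3 S q₀ (a • p + (1 - a) • q₀) ≤ b} α ∧
      ∀ q ∈ simplex3, nb3 S q₀ q ≤ b → q ≠ α • p + (1 - α) • q₀ →
        dot3 p (S q) < dot3 p (S (α • p + (1 - α) • q₀))


section Stmt2Aux

lemma relint3_subset : relint3 ⊆ simplex3 := fun q hq => ⟨fun i => (hq.1 i).le, hq.2⟩
lemma dot3_expand (p s : Fin 3 → ℝ) : dot3 p s = p 0 * s 0 + p 1 * s 1 + p 2 * s 2 := by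
  simp [dot3, Fin.sum_univ_three]
def dot3lin (q : Fin 3 → ℝ) : (Fin 3 → ℝ) →ₗ[ℝ] ℝ where
  toFun := fun w => dot3 q w
  map_add' := by intro a b; simp [dot3_expand]; ring
  map_smul' := by intro c a; simp [dot3_expand]; ring
def dot3clm (q : Fin 3 → ℝ) : (Fin 3 → ℝ) →L[ℝ] ℝ :=
  LinearMap.toContinuousLinearMap (dot3lin q)
@[simp] lemma dot3clm_apply (q w : Fin 3 → ℝ) : dot3clm q w = dot3 q w := rfl
def T2lin : (Fin 2 → ℝ) →ₗ[ℝ] (Fin 3 → ℝ) where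
  toFun := fun z => ![z 0, z 1, -z 0 - z 1]
  map_add' := by intro a b; funext i; fin_cases i <;> (simp; try ring)
  map_smul' := by intro c a; funext i; fin_cases i <;> (simp; try ring)
def T2clm : (Fin 2 → ℝ) →L[ℝ] (Fin 3 → ℝ) := LinearMap.toContinuousLinearMap T2lin
@[simp] lemma T2clm_apply (z : Fin 2 → ℝ) : T2clm z = ![z 0, z 1, -z 0 - z 1] := rfl
def Tmap (z : Fin 2 → ℝ) : Fin 3 → ℝ := ![(1:ℝ)/3, 1/3, 1/3] + T2clm z
lemma Tmap_apply (z : Fin 2 → ℝ) :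
    Tmap z 0 = 1/3 + z 0 ∧ Tmap z 1 = 1/3 + z 1 ∧ Tmap z 2 = 1/3 - z 0 - z 1 := by
  refine ⟨?_, ?_, ?_⟩ <;> (simp [Tmap]; try ring)
lemma Tmap_sum (z : Fin 2 → ℝ) : ∑ i, Tmap z i = 1 := by
  simp [Fin.sum_univ_three, Tmap]; ring
lemma Tmap_add (z w : Fin 2 → ℝ) : Tmap (z + w) = Tmap z + T2clm w := by
  simp only [Tmap, map_add]; abel
def Om : Set (Fin 2 → ℝ) := {z | ∀ i, 0 < Tmap z i}
lemma Tmap_mem_relint {z : Fin 2 → ℝ} (hz : z ∈ Om) : Tmap z ∈ relint3 := ⟨hz, Tmap_sum z⟩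
lemma isOpen_Om : IsOpen Om := by
  have : Om = ⋂ i, (fun z => Tmap z i) ⁻¹' Set.Ioi 0 := by
    ext z; simp [Om, Set.mem_iInter]
  rw [this]
  refine isOpen_iInter_of_finite (fun i => ?_)
  have hc : Continuous fun z : Fin 2 → ℝ => Tmap z i := by
    exact (continuous_const.add ((continuous_apply i).comp T2clm.continuous))
  exact isOpen_Ioi.preimage hc
lemma zero_mem_Om : (0 : Fin 2 → ℝ) ∈ Om := by
  intro i; fin_cases i <;> simp [Tmap]
lemma strict_mono_S {S : (Fin 3 → ℝ) → Fin 3 → ℝ} (hSP : StrictlyProper3 S)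
    {x y : Fin 3 → ℝ} (hx : x ∈ simplex3) (hy : y ∈ simplex3) (hxy : x ≠ y) :
    dot3 x (S y) + dot3 y (S x) < dot3 x (S x) + dot3 y (S y) := by
  have h1 := hSP x hx y hy hxy
  have h2 := hSP y hy x hx (Ne.symm hxy)
  linarith

section A2
variable {S : (Fin 3 → ℝ) → Fin 3 → ℝ}

lemma line_mem {z : Fin 2 → ℝ} (hz : z ∈ Om) (w : Fin 2 → ℝ) :
    ∃ ε > 0, ∀ τ : ℝ, |τ| < ε → z + τ • w ∈ Om := by
  obtain ⟨ε₀, hε₀, hball⟩ := Metric.isOpen_iff.mp isOpen_Om z hz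
  refine ⟨ε₀ / (‖w‖ + 1), by positivity, fun τ hτ => ?_⟩
  apply hball
  rw [Metric.mem_ball, dist_eq_norm, add_sub_cancel_left, norm_smul, Real.norm_eq_abs]
  have h1 : |τ| * ‖w‖ ≤ |τ| * (‖w‖ + 1) := by
    apply mul_le_mul_of_nonneg_left (by linarith) (abs_nonneg τ)
  have h2 : |τ| * (‖w‖ + 1) < ε₀ := by
    rw [← lt_div_iff₀ (by positivity)]; exact hτ
  linarith

lemma hasDerivAt_S_line (hd : DifferentiableOn ℝ S relint3) {z : Fin 2 → ℝ} (hz : z ∈ Om)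
    (w : Fin 2 → ℝ) :
    HasDerivAt (fun τ : ℝ => S (Tmap (z + τ • w)))
      (fderivWithin ℝ S relint3 (Tmap z) (T2clm w)) 0 := by
  obtain ⟨ε, hε, hmem⟩ := line_mem hz w
  have hinner : HasDerivAt (fun τ : ℝ => Tmap (z + τ • w)) (T2clm w) 0 := by
    have h1 : (fun τ : ℝ => Tmap (z + τ • w)) = fun τ : ℝ => Tmap z + τ • T2clm w := by
      funext τ; rw [Tmap_add]; congr 1; simp [map_smul]
    rw [h1]
    simpa using ((hasDerivAt_id (0:ℝ)).smul_const (T2clm w)).const_add (Tmap z)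
  have houter : HasFDerivWithinAt S (fderivWithin ℝ S relint3 (Tmap z)) relint3 (Tmap z) :=
    (hd _ (Tmap_mem_relint hz)).hasFDerivWithinAt
  have hmapsto : Set.MapsTo (fun τ : ℝ => Tmap (z + τ • w)) (Set.Ioo (-ε) ε) relint3 := by
    intro τ hτ
    exact Tmap_mem_relint (hmem τ (abs_lt.mpr ⟨hτ.1, hτ.2⟩))
  have houter2 : HasFDerivWithinAt S (fderivWithin ℝ S relint3 (Tmap z)) relint3
      (Tmap (z + (0:ℝ) • w)) := by simpa using houter
  have hcomp := houter2.comp_hasDerivWithinAt (0:ℝ)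
      (hinner.hasDerivWithinAt (s := Set.Ioo (-ε) ε)) hmapsto
  exact hcomp.hasDerivAt (Ioo_mem_nhds (by linarith) hε)

lemma crit (hSP : StrictlyProper3 S) (hd : DifferentiableOn ℝ S relint3)
    {z : Fin 2 → ℝ} (hz : z ∈ Om) (w : Fin 2 → ℝ) :
    dot3 (Tmap z) (fderivWithin ℝ S relint3 (Tmap z) (T2clm w)) = 0 := by
  set q := Tmap z with hq
  have hφ : HasDerivAt (fun τ : ℝ => dot3clm q (S (Tmap (z + τ • w))))
      (dot3clm q (fderivWithin ℝ S relint3 q (T2clm w))) 0 :=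
    (dot3clm q).hasFDerivAt.comp_hasDerivAt 0 (hasDerivAt_S_line hd hz w)
  have hmax : IsLocalMax (fun τ : ℝ => dot3clm q (S (Tmap (z + τ • w)))) 0 := by
    obtain ⟨ε, hε, hmem⟩ := line_mem hz w
    rw [IsLocalMax, IsMaxFilter]
    rw [Metric.eventually_nhds_iff]
    refine ⟨ε, hε, fun {τ} hτ => ?_⟩
    rw [Real.dist_eq, sub_zero] at hτ
    have hpt : Tmap (z + τ • w) ∈ simplex3 := relint3_subset (Tmap_mem_relint (hmem τ hτ))
    have hqs : q ∈ simplex3 := relint3_subset (Tmap_mem_relint hz)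
    by_cases he : Tmap (z + τ • w) = q
    · simp [he]; rfl
    · have := hSP q hqs _ hpt (Ne.symm he)
      simpa using this.le
  have := hmax.hasDerivAt_eq_zero hφ
  simpa using this

lemma deriv_pos_right {φ : ℝ → ℝ} {L : ℝ} (h : HasDerivAt φ L 0) (hL : 0 < L) :
    ∃ ε > 0, ∀ τ : ℝ, 0 < τ → τ < ε → φ 0 < φ τ := by
  have hs := hasDerivAt_iff_tendsto_slope.mp h
  have h2 : ∀ᶠ τ in nhdsWithin (0:ℝ) {(0:ℝ)}ᶜ, 0 < slope φ 0 τ :=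
    hs.eventually (isOpen_Ioi.eventually_mem hL)
  have h3 : ∀ᶠ τ in nhdsWithin (0:ℝ) (Set.Ioi 0), 0 < slope φ 0 τ :=
    h2.filter_mono (nhdsWithin_mono 0 (fun x hx => ne_of_gt hx))
  rw [Filter.eventually_iff, Metric.mem_nhdsWithin_iff] at h3
  obtain ⟨ε, hε, hsub⟩ := h3
  refine ⟨ε, hε, fun τ hτ1 hτ2 => ?_⟩
  have : τ ∈ Metric.ball (0:ℝ) ε ∩ Set.Ioi 0 := by
    constructor
    · rw [Metric.mem_ball, Real.dist_eq, sub_zero]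
      rw [abs_of_pos hτ1]; exact hτ2
    · exact hτ1
  have hslope := hsub this
  simp only [Set.mem_setOf_eq, slope_def_field, sub_zero] at hslope
  have := mul_pos hslope hτ1
  rw [div_mul_cancel₀] at this
  · linarith
  · exact ne_of_gt hτ1

-- 2-d Farkas
lemma farkas2 (g10 g11 g20 g21 : ℝ)
    (h : ∀ d0 d1 : ℝ, ¬(0 < g10 * d0 + g11 * d1 ∧ 0 < g20 * d0 + g21 * d1)) :
    ∃ a b : ℝ, 0 ≤ a ∧ 0 ≤ b ∧ ¬(a = 0 ∧ b = 0) ∧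
      a * g10 + b * g20 = 0 ∧ a * g11 + b * g21 = 0 := by
  by_cases hg1 : g10 = 0 ∧ g11 = 0
  · exact ⟨1, 0, by norm_num, by norm_num, by norm_num, by rw [hg1.1]; ring, by rw [hg1.2]; ring⟩
  by_cases hg2 : g20 = 0 ∧ g21 = 0
  · exact ⟨0, 1, by norm_num, by norm_num, by norm_num, by rw [hg2.1]; ring, by rw [hg2.2]; ring⟩
  set Dt := g10 * g21 - g11 * g20 with hDt
  by_cases hD : Dt = 0
  · -- dependent, g1 ≠ 0
    have hg1' : g10 ≠ 0 ∨ g11 ≠ 0 := by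
      by_contra hc; push_neg at hc; exact hg1 ⟨hc.1, hc.2⟩
    -- find t with g2 = t • g1
    have ht : ∃ t : ℝ, g20 = t * g10 ∧ g21 = t * g11 := by
      rcases hg1' with h0 | h1
      · refine ⟨g20 / g10, by field_simp, ?_⟩
        have : g21 = g11 * g20 / g10 := by
          field_simp
          nlinarith [hD, hDt]
        rw [this]; ring
      · refine ⟨g21 / g11, ?_, by field_simp⟩
        have : g20 = g10 * g21 / g11 := by
          field_simp
          nlinarith [hD, hDt]
        rw [this]; ring
    obtain ⟨t, ht0, ht1⟩ := ht
    have htle : t ≤ 0 := by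
      by_contra hcon
      push_neg at hcon
      have hpos : 0 < g10 * g10 + g11 * g11 := by
        rcases hg1' with h0 | h1
        · nlinarith [mul_self_pos.mpr h0, mul_self_nonneg g11]
        · nlinarith [mul_self_pos.mpr h1, mul_self_nonneg g10]
      exact h g10 g11 ⟨hpos, by rw [ht0, ht1]; nlinarith⟩
    refine ⟨-t, 1, by linarith, by norm_num, by norm_num, ?_, ?_⟩
    · rw [ht0]; ring
    · rw [ht1]; ring
  · -- independent : contradiction
    exfalso
    apply h ((g21 - g11) / Dt) ((g10 - g20) / Dt)
    constructor
    · have : g10 * ((g21 - g11) / Dt) + g11 * ((g10 - g20) / Dt) = Dt / Dt := by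
        field_simp; ring
      rw [this, div_self hD]; norm_num
    · have : g20 * ((g21 - g11) / Dt) + g21 * ((g10 - g20) / Dt) = Dt / Dt := by
        field_simp; ring
      rw [this, div_self hD]; norm_num

def cross3 (a b : Fin 3 → ℝ) : Fin 3 → ℝ :=
  ![a 1 * b 2 - a 2 * b 1, a 2 * b 0 - a 0 * b 2, a 0 * b 1 - a 1 * b 0]

lemma cross3_decomp (l q w : Fin 3 → ℝ) :
    (dot3 (cross3 l q) (cross3 l q)) • w =
      (dot3 w (cross3 l q)) • (cross3 l q) + (dot3 q w) • (cross3 (cross3 l q) l)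
        - (dot3 l w) • (cross3 (cross3 l q) q) := by
  funext i; fin_cases i <;>
    (simp [cross3, dot3_expand, Pi.smul_apply, Pi.add_apply, Pi.sub_apply, smul_eq_mul]; ring)

lemma parallel_of_orth {l q w : Fin 3 → ℝ} (h1 : dot3 l w = 0) (h2 : dot3 q w = 0) :
    (dot3 (cross3 l q) (cross3 l q)) • w = (dot3 w (cross3 l q)) • (cross3 l q) := by
  have := cross3_decomp l q w
  rw [h1, h2] at this
  simpa using this

end A2
section A4
variable {S : (Fin 3 → ℝ) → Fin 3 → ℝ}

def uvec : Fin 3 → ℝ := ![1, 0, -1]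
def vvec : Fin 3 → ℝ := ![0, 1, -1]

def Llin : (Fin 3 → ℝ) →ₗ[ℝ] (Fin 2 → ℝ) where
  toFun := fun s => ![dot3 uvec s, dot3 vvec s]
  map_add' := by intro a b; funext i; fin_cases i <;> (simp [dot3_expand]; try ring)
  map_smul' := by intro c a; funext i; fin_cases i <;> (simp [dot3_expand]; try ring)

def Lclm : (Fin 3 → ℝ) →L[ℝ] (Fin 2 → ℝ) := LinearMap.toContinuousLinearMap Llin

@[simp] lemma Lclm_apply (s : Fin 3 → ℝ) : Lclm s = ![dot3 uvec s, dot3 vvec s] := rfl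

def Fmap (S : (Fin 3 → ℝ) → Fin 3 → ℝ) (z : Fin 2 → ℝ) : Fin 2 → ℝ := Lclm (S (Tmap z))

lemma Fmap_zero_apply (z : Fin 2 → ℝ) :
    Fmap S z 0 = dot3 uvec (S (Tmap z)) ∧ Fmap S z 1 = dot3 vvec (S (Tmap z)) := by
  constructor <;> simp [Fmap]

def dot2 (x y : Fin 2 → ℝ) : ℝ := x 0 * y 0 + x 1 * y 1

def Gt (S : (Fin 3 → ℝ) → Fin 3 → ℝ) (z : Fin 2 → ℝ) : ℝ := dot3 (Tmap z) (S (Tmap z))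

lemma Tmap_inj {z z' : Fin 2 → ℝ} (h : Tmap z = Tmap z') : z = z' := by
  funext i
  fin_cases i
  · have := congrFun h 0; simpa [Tmap] using this
  · have := congrFun h 1; simpa [Tmap] using this

lemma Fmono (hSP : StrictlyProper3 S) {z z' : Fin 2 → ℝ} (hz : z ∈ Om) (hz' : z' ∈ Om)
    (hne : z ≠ z') : 0 < dot2 (Fmap S z - Fmap S z') (z - z') := by
  have hxy : Tmap z ≠ Tmap z' := fun h => hne (Tmap_inj h)
  have h := strict_mono_S hSP (relint3_subset (Tmap_mem_relint hz))
    (relint3_subset (Tmap_mem_relint hz')) hxy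
  have key : dot2 (Fmap S z - Fmap S z') (z - z') =
      (dot3 (Tmap z) (S (Tmap z)) + dot3 (Tmap z') (S (Tmap z'))) -
      (dot3 (Tmap z) (S (Tmap z')) + dot3 (Tmap z') (S (Tmap z))) := by
    simp only [dot2, Pi.sub_apply, Fmap, Lclm_apply, dot3_expand, Tmap]
    simp [uvec, vvec]
    ring
  rw [key]; linarith

lemma hasDerivAt_G_line (hSP : StrictlyProper3 S) (hd : DifferentiableOn ℝ S relint3)
    {z : Fin 2 → ℝ} (hz : z ∈ Om) (w : Fin 2 → ℝ) :
    HasDerivAt (fun τ : ℝ => Gt S (z + τ • w)) (dot2 (Fmap S z) w) 0 := by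
  set q := Tmap z with hqdef
  set δ := T2clm w with hδdef
  set f' := fderivWithin ℝ S relint3 q with hf'def
  have hvec : HasDerivAt (fun τ : ℝ => S (Tmap (z + τ • w))) (f' δ) 0 :=
    hasDerivAt_S_line hd hz w
  have hcomp : ∀ i : Fin 3, HasDerivAt (fun τ : ℝ => S (Tmap (z + τ • w)) i) (f' δ i) 0 :=
    fun i => (ContinuousLinearMap.proj (R := ℝ) (φ := fun _ : Fin 3 => ℝ) i).hasFDerivAt.comp_hasDerivAt 0 hvec
  have hcoord : ∀ i : Fin 3, HasDerivAt (fun τ : ℝ => Tmap (z + τ • w) i) (δ i) 0 := by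
    intro i
    have h1 : (fun τ : ℝ => Tmap (z + τ • w) i) = fun τ : ℝ => Tmap z i + τ * δ i := by
      funext τ
      rw [Tmap_add]
      simp only [hδdef, map_smul, Pi.add_apply, Pi.smul_apply, smul_eq_mul]
    rw [h1]
    simpa using ((hasDerivAt_id (0:ℝ)).mul_const (δ i)).const_add (Tmap z i)
  have hprod : HasDerivAt (fun τ : ℝ => Gt S (z + τ • w))
      ((δ 0 * S q 0 + q 0 * f' δ 0) + (δ 1 * S q 1 + q 1 * f' δ 1)
        + (δ 2 * S q 2 + q 2 * f' δ 2)) 0 := by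
    have heq : (fun τ : ℝ => Gt S (z + τ • w)) =
        fun τ : ℝ => (Tmap (z + τ • w) 0 * S (Tmap (z + τ • w)) 0
          + Tmap (z + τ • w) 1 * S (Tmap (z + τ • w)) 1)
          + Tmap (z + τ • w) 2 * S (Tmap (z + τ • w)) 2 := by
      funext τ; rw [Gt, dot3_expand]; try ring
    rw [heq]
    have h0 := (hcoord 0).mul (hcomp 0)
    have h1 := (hcoord 1).mul (hcomp 1)
    have h2 := (hcoord 2).mul (hcomp 2)
    have hsum := (h0.add h1).add h2
    have hz0 : z + (0:ℝ) • w = z := by simp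
    rw [hz0] at hsum
    exact hsum
  have hcrit := crit hSP hd hz w
  have hval : (δ 0 * S q 0 + q 0 * f' δ 0) + (δ 1 * S q 1 + q 1 * f' δ 1)
      + (δ 2 * S q 2 + q 2 * f' δ 2) = dot2 (Fmap S z) w := by
    rw [dot3_expand] at hcrit
    have hδc : δ 0 = w 0 ∧ δ 1 = w 1 ∧ δ 2 = -w 0 - w 1 := by
      refine ⟨?_, ?_, ?_⟩ <;> simp [hδdef]
    have hF0 := (Fmap_zero_apply (S := S) z).1
    have hF1 := (Fmap_zero_apply (S := S) z).2
    rw [dot2, hF0, hF1, dot3_expand, dot3_expand]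
    simp only [uvec, vvec]
    simp only [Matrix.cons_val_zero, Matrix.cons_val_one, Matrix.head_cons,
      Matrix.cons_val_two, Matrix.tail_cons]
    rw [hδc.1, hδc.2.1, hδc.2.2]
    nlinarith [hcrit]
  rw [hval] at hprod
  exact hprod
end A4
section A5
variable {S : (Fin 3 → ℝ) → Fin 3 → ℝ}

lemma dot2_smul_right (A : Fin 2 → ℝ) (c : ℝ) (ξ : Fin 2 → ℝ) :
    dot2 A (c • ξ) = c * dot2 A ξ := by
  simp [dot2]; ring

lemma Gstrict (hSP : StrictlyProper3 S) (hd : DifferentiableOn ℝ S relint3)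
    {z₀ x : Fin 2 → ℝ} (hseg : ∀ t : ℝ, t ∈ Set.Icc (0:ℝ) 1 → z₀ + t • (x - z₀) ∈ Om)
    (hne : x ≠ z₀) :
    0 < Gt S x - Gt S z₀ - dot2 (Fmap S z₀) (x - z₀) := by
  set ξ := x - z₀ with hξ
  have hξne : ξ ≠ 0 := sub_ne_zero.mpr hne
  set h : ℝ → ℝ := fun t => Gt S (z₀ + t • ξ) - t * dot2 (Fmap S z₀) ξ with hh
  have hderiv : ∀ t ∈ Set.Icc (0:ℝ) 1,
      HasDerivAt h (dot2 (Fmap S (z₀ + t • ξ)) ξ - dot2 (Fmap S z₀) ξ) t := by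
    intro t ht
    have hzt : z₀ + t • ξ ∈ Om := hseg t ht
    have hG := hasDerivAt_G_line hSP hd hzt ξ
    -- reparametrize
    have hiden : (fun s : ℝ => Gt S (z₀ + s • ξ)) =
        (fun τ : ℝ => Gt S ((z₀ + t • ξ) + τ • ξ)) ∘ (fun s : ℝ => s - t) := by
      funext s
      simp only [Function.comp_apply]
      congr 1
      rw [sub_smul]; abel
    have hinner : HasDerivAt (fun s : ℝ => s - t) 1 t := by
      simpa using (hasDerivAt_id t).sub_const t
    have hcomp : HasDerivAt (fun s : ℝ => Gt S (z₀ + s • ξ))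
        (dot2 (Fmap S (z₀ + t • ξ)) ξ) t := by
      rw [hiden]
      have := HasDerivAt.comp (h₂ := fun τ : ℝ => Gt S ((z₀ + t • ξ) + τ • ξ))
        (h := fun s : ℝ => s - t) t (by simpa using hG) hinner
      simpa using this
    have hlin : HasDerivAt (fun s : ℝ => s * dot2 (Fmap S z₀) ξ) (dot2 (Fmap S z₀) ξ) t := by
      simpa using (hasDerivAt_id t).mul_const (dot2 (Fmap S z₀) ξ)
    exact hcomp.sub hlin
  have hcont : ContinuousOn h (Set.Icc 0 1) := fun t ht =>
    ((hderiv t ht).continuousAt).continuousWithinAt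
  obtain ⟨c, hc, hslope⟩ := exists_hasDerivAt_eq_slope h
    (fun t => dot2 (Fmap S (z₀ + t • ξ)) ξ - dot2 (Fmap S z₀) ξ) one_pos hcont
    (fun t ht => hderiv t ⟨ht.1.le, ht.2.le⟩)
  have hcpos : 0 < dot2 (Fmap S (z₀ + c • ξ)) ξ - dot2 (Fmap S z₀) ξ := by
    have hzc : z₀ + c • ξ ∈ Om := hseg c ⟨hc.1.le, hc.2.le⟩
    have hz₀ : z₀ ∈ Om := by simpa using hseg 0 ⟨le_refl 0, zero_le_one⟩
    have hnez : z₀ + c • ξ ≠ z₀ := by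
      intro hcon
      apply hξne
      have : c • ξ = 0 := by
        have := congrArg (fun y => y - z₀) hcon
        simpa using this
      have := smul_eq_zero.mp this
      rcases this with h | h
      · exact absurd h (ne_of_gt hc.1)
      · exact absurd h hξne
    have hmono := Fmono hSP hzc hz₀ hnez
    have hsub : (z₀ + c • ξ) - z₀ = c • ξ := by abel
    rw [hsub, dot2_smul_right] at hmono
    have h2 : 0 < dot2 (Fmap S (z₀ + c • ξ) - Fmap S z₀) ξ := by
      have := (mul_pos_iff.mp hmono)
      rcases this with ⟨_, h⟩ | ⟨h1, _⟩
      · exact h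
      · exact absurd hc.1 (not_lt.mpr h1.le)
    have hexp : dot2 (Fmap S (z₀ + c • ξ) - Fmap S z₀) ξ =
        dot2 (Fmap S (z₀ + c • ξ)) ξ - dot2 (Fmap S z₀) ξ := by
      simp [dot2]; ring
    rwa [hexp] at h2
  have hval : h 1 - h 0 = Gt S x - Gt S z₀ - dot2 (Fmap S z₀) (x - z₀) := by
    simp only [hh]
    have h1x : z₀ + (1:ℝ) • ξ = x := by rw [one_smul, hξ]; abel
    have h0x : z₀ + (0:ℝ) • ξ = z₀ := by simp
    rw [h1x, h0x, hξ]
    ring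
  rw [← hval]
  have h9 : (h 1 - h 0) / (1 - 0) = h 1 - h 0 := by norm_num
  rw [h9] at hslope
  linarith
end A5
section A6
variable {S : (Fin 3 → ℝ) → Fin 3 → ℝ}

lemma continuous_Tmap : Continuous Tmap := by
  unfold Tmap
  exact continuous_const.add T2clm.continuous

lemma continuousOn_ST (hcont : ContinuousOn S simplex3) :
    ContinuousOn (fun z => S (Tmap z)) Om :=
  hcont.comp continuous_Tmap.continuousOn
    (fun z hz => relint3_subset (Tmap_mem_relint hz))

lemma continuousOn_Gt (hcont : ContinuousOn S simplex3) : ContinuousOn (Gt S) Om := by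
  have hST := continuousOn_ST (S := S) hcont
  have : ContinuousOn (fun z => dot3 (Tmap z) (S (Tmap z))) Om := by
    have heq : (fun z => dot3 (Tmap z) (S (Tmap z))) = fun z =>
        Tmap z 0 * S (Tmap z) 0 + Tmap z 1 * S (Tmap z) 1 + Tmap z 2 * S (Tmap z) 2 := by
      funext z; rw [dot3_expand]
    rw [heq]
    have hTc : ∀ i : Fin 3, ContinuousOn (fun z => Tmap z i) Om :=
      fun i => ((continuous_apply i).comp continuous_Tmap).continuousOn
    have hSc : ∀ i : Fin 3, ContinuousOn (fun z => S (Tmap z) i) Om :=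
      fun i => (continuous_apply i).comp_continuousOn hST
    exact (((hTc 0).mul (hSc 0)).add ((hTc 1).mul (hSc 1))).add ((hTc 2).mul (hSc 2))
  exact this

lemma abs_dot2_le (w ξ : Fin 2 → ℝ) : |dot2 w ξ| ≤ 2 * ‖w‖ * ‖ξ‖ := by
  have h0 : |w 0| ≤ ‖w‖ := by
    have := norm_le_pi_norm w 0; simpa using this
  have h1 : |w 1| ≤ ‖w‖ := by
    have := norm_le_pi_norm w 1; simpa using this
  have k0 : |ξ 0| ≤ ‖ξ‖ := by
    have := norm_le_pi_norm ξ 0; simpa using this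
  have k1 : |ξ 1| ≤ ‖ξ‖ := by
    have := norm_le_pi_norm ξ 1; simpa using this
  have habs : |dot2 w ξ| ≤ |w 0| * |ξ 0| + |w 1| * |ξ 1| := by
    rw [dot2]
    calc |w 0 * ξ 0 + w 1 * ξ 1| ≤ |w 0 * ξ 0| + |w 1 * ξ 1| := abs_add_le _ _
    _ = |w 0| * |ξ 0| + |w 1| * |ξ 1| := by rw [abs_mul, abs_mul]
  have hn : 0 ≤ ‖ξ‖ := norm_nonneg ξ
  have hw : 0 ≤ ‖w‖ := norm_nonneg w
  nlinarith [mul_le_mul h0 k0 (abs_nonneg _) hw, mul_le_mul h1 k1 (abs_nonneg _) hw]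

lemma ball_sub_image (hSP : StrictlyProper3 S) (hcont : ContinuousOn S simplex3)
    (hd : DifferentiableOn ℝ S relint3) :
    ∃ ρ > 0, ∃ pt : Fin 2 → ℝ, Metric.ball pt ρ ⊆ Fmap S '' Om := by
  -- choose a closed ball inside Om around 0
  obtain ⟨ε₀, hε₀, hball⟩ := Metric.isOpen_iff.mp isOpen_Om 0 zero_mem_Om
  set r := ε₀ / 2 with hr
  have hrpos : 0 < r := by positivity
  have hcb : Metric.closedBall (0 : Fin 2 → ℝ) r ⊆ Om := fun x hx => by
    apply hball
    rw [Metric.mem_closedBall] at hx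
    rw [Metric.mem_ball]
    calc dist x 0 ≤ r := hx
    _ < ε₀ := by rw [hr]; linarith
  -- min of the linearized gap over the sphere
  set p₀ := Fmap S 0 with hp₀
  set φ := fun x => Gt S x - dot2 p₀ x with hφ
  have hφcont : ContinuousOn φ (Metric.sphere (0 : Fin 2 → ℝ) r) := by
    apply ContinuousOn.sub
    · exact (continuousOn_Gt hcont).mono
        (fun x hx => hcb (Metric.sphere_subset_closedBall hx))
    · exact (continuous_const.mul (continuous_apply 0)|>.add
        (continuous_const.mul (continuous_apply 1))).continuousOn.congr
        (fun x _ => by rw [dot2]; rfl)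
  have hsne : (Metric.sphere (0 : Fin 2 → ℝ) r).Nonempty :=
    NormedSpace.sphere_nonempty.mpr hrpos.le
  obtain ⟨xm, hxm, hxmmin⟩ := (isCompact_sphere (0 : Fin 2 → ℝ) r).exists_isMinOn hsne hφcont
  -- the gap at xm
  have hsegm : ∀ x : Fin 2 → ℝ, x ∈ Metric.closedBall (0 : Fin 2 → ℝ) r →
      ∀ t : ℝ, t ∈ Set.Icc (0:ℝ) 1 → (0 : Fin 2 → ℝ) + t • (x - 0) ∈ Om := by
    intro x hx t ht
    apply hcb
    rw [Metric.mem_closedBall] at hx ⊢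
    simp only [zero_add, sub_zero]
    rw [dist_zero_right] at hx ⊢
    rw [norm_smul, Real.norm_eq_abs, abs_of_nonneg ht.1]
    calc t * ‖x‖ ≤ 1 * ‖x‖ := mul_le_mul_of_nonneg_right ht.2 (norm_nonneg x)
    _ = ‖x‖ := one_mul _
    _ ≤ r := hx
  have hxm0 : xm ≠ 0 := by
    intro hcon
    rw [Metric.mem_sphere, hcon] at hxm
    simp at hxm
    linarith
  set m := Gt S xm - Gt S 0 - dot2 p₀ (xm - 0) with hm
  have hmpos : 0 < m := by
    rw [hm, hp₀]
    exact Gstrict hSP hd (by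
      intro t ht
      simpa using hsegm xm (Metric.sphere_subset_closedBall hxm) t ht) hxm0
  -- choose ρ
  set ρ := m / (2 * r + 1) with hρ
  have hρpos : 0 < ρ := by positivity
  refine ⟨ρ, hρpos, p₀, fun p hp => ?_⟩
  rw [Metric.mem_ball] at hp
  -- minimize gp over closed ball
  set gp := fun x => Gt S x - dot2 p x with hgp
  have hgpcont : ContinuousOn gp (Metric.closedBall (0 : Fin 2 → ℝ) r) := by
    apply ContinuousOn.sub
    · exact (continuousOn_Gt hcont).mono hcb
    · exact (continuous_const.mul (continuous_apply 0)|>.add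
        (continuous_const.mul (continuous_apply 1))).continuousOn.congr
        (fun x _ => by rw [dot2]; rfl)
  obtain ⟨xs, hxs, hxsmin⟩ := (isCompact_closedBall (0 : Fin 2 → ℝ) r).exists_isMinOn
    ⟨0, by simp [hrpos.le]⟩ hgpcont
  -- xs is in the open ball
  have hxslt : ‖xs‖ < r := by
    by_contra hcon
    push_neg at hcon
    have hxs_sphere : xs ∈ Metric.sphere (0 : Fin 2 → ℝ) r := by
      rw [Metric.mem_closedBall, dist_zero_right] at hxs
      rw [Metric.mem_sphere, dist_zero_right]
      linarith
    -- on the sphere, gp x - gp 0 > 0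
    have hgap : m ≤ Gt S xs - Gt S 0 - dot2 p₀ (xs - 0) := by
      have h5 : φ xm ≤ φ xs := hxmmin hxs_sphere
      simp only [hφ] at h5
      simp only [hm, sub_zero] at *
      linarith
    have hdot : |dot2 (p - p₀) xs| ≤ 2 * ρ * r := by
      calc |dot2 (p - p₀) xs| ≤ 2 * ‖p - p₀‖ * ‖xs‖ := abs_dot2_le _ _
      _ ≤ 2 * ρ * r := by
        have h1 : ‖p - p₀‖ ≤ ρ := by
          rw [← dist_eq_norm]; exact hp.le
        have h2 : ‖xs‖ = r := by
          rw [Metric.mem_sphere, dist_zero_right] at hxs_sphere; exact hxs_sphere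
        rw [h2]
        have := mul_le_mul_of_nonneg_right h1 hrpos.le
        nlinarith
    have h2ρr : 2 * ρ * r < m := by
      have he : 2 * ρ * r = m * (2 * r) / (2 * r + 1) := by rw [hρ]; ring
      rw [he, div_lt_iff₀ (by positivity)]
      nlinarith
    -- but gp xs ≤ gp 0
    have hmin0 := hxsmin (by simp [hrpos.le] : (0:Fin 2 → ℝ) ∈ Metric.closedBall (0:Fin 2 → ℝ) r)
    simp only [hgp] at hmin0
    -- gp xs - gp 0 = (Gt xs - Gt 0 - dot2 p₀ xs) - dot2 (p - p₀) xs ... 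
    have hexpand : dot2 p xs = dot2 p₀ xs + dot2 (p - p₀) xs := by
      simp [dot2]; ring
    have hdot20 : dot2 p (0 : Fin 2 → ℝ) = 0 := by simp [dot2]
    rw [sub_zero] at hgap
    have : Gt S xs - dot2 p xs ≥ Gt S 0 - dot2 p 0 + (m - |dot2 (p - p₀) xs|) := by
      rw [hexpand, hdot20]
      have habs : dot2 (p - p₀) xs ≤ |dot2 (p - p₀) xs| := le_abs_self _
      linarith
    have hfin : Gt S 0 - dot2 p 0 < Gt S xs - dot2 p xs := by
      have : m - |dot2 (p - p₀) xs| > 0 := by linarith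
      linarith
    exact absurd hmin0 (not_le.mpr hfin)
  -- xs interior: local min, derivative zero
  have hxsOm : xs ∈ Om := hcb (by rw [Metric.mem_closedBall, dist_zero_right]; exact hxslt.le)
  have hlocmin : IsLocalMin gp xs := by
    apply hxsmin.isLocalMin
    apply Filter.mem_of_superset (Metric.isOpen_ball.mem_nhds
      (by rw [Metric.mem_ball, dist_zero_right]; exact hxslt))
    exact Metric.ball_subset_closedBall
  have hFeq : ∀ i : Fin 2, Fmap S xs i = p i := by
    intro i
    set e : Fin 2 → ℝ := Pi.single i 1 with he
    have hline : IsLocalMin (fun τ : ℝ => gp (xs + τ • e)) 0 := by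
      have hc : ContinuousAt (fun τ : ℝ => xs + τ • e) 0 := by
        apply Continuous.continuousAt
        exact continuous_const.add (continuous_id.smul continuous_const)
      have h0 : xs + (0:ℝ) • e = xs := by simp
      have hlm : IsLocalMin gp ((fun τ : ℝ => xs + τ • e) 0) := by
        simpa only [h0] using hlocmin
      have := IsLocalMin.comp_continuous (f := gp) (g := fun τ : ℝ => xs + τ • e)
        (b := (0:ℝ)) hlm hc
      exact this
    have hderiv : HasDerivAt (fun τ : ℝ => gp (xs + τ • e))
        (dot2 (Fmap S xs) e - dot2 p e) 0 := by
      have hG := hasDerivAt_G_line hSP hd hxsOm e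
      have hlin : HasDerivAt (fun τ : ℝ => dot2 p (xs + τ • e)) (dot2 p e) 0 := by
        have heq2 : (fun τ : ℝ => dot2 p (xs + τ • e)) =
            fun τ : ℝ => dot2 p xs + τ * dot2 p e := by
          funext τ; simp [dot2]; ring
        rw [heq2]
        simpa using ((hasDerivAt_id (0:ℝ)).mul_const (dot2 p e)).const_add (dot2 p xs)
      exact hG.sub hlin
    have := hline.hasDerivAt_eq_zero hderiv
    have hdote : ∀ A : Fin 2 → ℝ, dot2 A e = A i := by
      intro A
      fin_cases i <;> simp [dot2, he, Pi.single_apply]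
    rw [hdote, hdote] at this
    linarith [this]
  exact ⟨xs, hxsOm, funext hFeq⟩
end A6
section A7
open MeasureTheory
variable {S : (Fin 3 → ℝ) → Fin 3 → ℝ}

def e20 : Fin 2 → ℝ := ![1, 0]
def e21 : Fin 2 → ℝ := ![0, 1]

lemma decomp2 (d : Fin 2 → ℝ) : d = d 0 • e20 + d 1 • e21 := by
  funext i; fin_cases i <;> simp [e20, e21]

lemma hasFDerivWithinAt_Fmap (hd : DifferentiableOn ℝ S relint3) {z : Fin 2 → ℝ} (hz : z ∈ Om) :
    HasFDerivWithinAt (Fmap S)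
      (Lclm.comp ((fderivWithin ℝ S relint3 (Tmap z)).comp T2clm)) Om z := by
  have hT : HasFDerivAt Tmap T2clm z := by
    have : Tmap = fun z => ![(1:ℝ)/3, 1/3, 1/3] + T2clm z := rfl
    rw [this]
    exact T2clm.hasFDerivAt.const_add _
  have hS : HasFDerivWithinAt S (fderivWithin ℝ S relint3 (Tmap z)) relint3 (Tmap z) :=
    (hd _ (Tmap_mem_relint hz)).hasFDerivWithinAt
  have hmaps : Set.MapsTo Tmap Om relint3 := fun x hx => Tmap_mem_relint hx
  have hST := hS.comp z hT.hasFDerivWithinAt hmaps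
  have := Lclm.hasFDerivAt.comp_hasFDerivWithinAt z hST
  exact this

lemma det_eq_zero_of_parallel {A : (Fin 2 → ℝ) →L[ℝ] (Fin 2 → ℝ)}
    (w1 w2 c : Fin 3 → ℝ) (γ1 γ2 : ℝ)
    (h1 : A e20 0 = dot3 uvec w1 ∧ A e20 1 = dot3 vvec w1)
    (h2 : A e21 0 = dot3 uvec w2 ∧ A e21 1 = dot3 vvec w2)
    (hw1 : w1 = γ1 • c) (hw2 : w2 = γ2 • c) : A.det = 0 := by
  have hdet : A.det = LinearMap.det (A : (Fin 2 → ℝ) →ₗ[ℝ] (Fin 2 → ℝ)) := rfl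
  rw [hdet, ← LinearMap.det_toMatrix (Pi.basisFun ℝ (Fin 2)), Matrix.det_fin_two]
  have hbasis : ∀ (j : Fin 2), (Pi.basisFun ℝ (Fin 2)) j = Pi.single j 1 := by
    intro j; simp [Pi.basisFun_apply]
  have he0 : (Pi.basisFun ℝ (Fin 2)) 0 = e20 := by
    rw [hbasis]; funext i; fin_cases i <;> simp [e20, Pi.single_apply]
  have he1 : (Pi.basisFun ℝ (Fin 2)) 1 = e21 := by
    rw [hbasis]; funext i; fin_cases i <;> simp [e21, Pi.single_apply]
  have hentry : ∀ (i j : Fin 2),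
      (LinearMap.toMatrix (Pi.basisFun ℝ (Fin 2)) (Pi.basisFun ℝ (Fin 2))
        (A : (Fin 2 → ℝ) →ₗ[ℝ] (Fin 2 → ℝ))) i j = A ((Pi.basisFun ℝ (Fin 2)) j) i := by
    intro i j
    rw [LinearMap.toMatrix_apply]
    simp
  rw [hentry, hentry, hentry, hentry, he0, he1, h1.1, h2.2, h2.1, h1.2, hw1, hw2]
  have hs : ∀ x : Fin 3 → ℝ, ∀ γ : ℝ, dot3 x (γ • c) = γ * dot3 x c := by
    intro x γ; rw [dot3_expand, dot3_expand]; simp; ring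
  rw [hs, hs, hs, hs]
  ring

lemma exists_cone (hSP : StrictlyProper3 S) (hcont : ContinuousOn S simplex3)
    (hd : DifferentiableOn ℝ S relint3) :
    ∃ z, z ∈ Om ∧ ∃ d : Fin 2 → ℝ,
      fderivWithin ℝ S relint3 (Tmap z) (T2clm d) 0 <
        fderivWithin ℝ S relint3 (Tmap z) (T2clm d) 1 ∧
      fderivWithin ℝ S relint3 (Tmap z) (T2clm d) 0 <
        fderivWithin ℝ S relint3 (Tmap z) (T2clm d) 2 := by
  by_contra hcon
  push_neg at hcon
  -- at every z ∈ Om, the derivative DF z is singular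
  have hsing : ∀ z ∈ Om, (Lclm.comp ((fderivWithin ℝ S relint3 (Tmap z)).comp T2clm)).det = 0 := by
    intro z hz
    set f' := fderivWithin ℝ S relint3 (Tmap z) with hf'
    set q := Tmap z with hq
    set w1 := f' (T2clm e20) with hw1def
    set w2 := f' (T2clm e21) with hw2def
    -- farkas hypothesis
    have hfark : ∀ d0 d1 : ℝ, ¬(0 < (w1 1 - w1 0) * d0 + (w2 1 - w2 0) * d1 ∧
        0 < (w1 2 - w1 0) * d0 + (w2 2 - w2 0) * d1) := by
      intro d0 d1 hcontra
      set d : Fin 2 → ℝ := d0 • e20 + d1 • e21 with hddef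
      have hMd : f' (T2clm d) = d0 • w1 + d1 • w2 := by
        rw [hddef]
        simp only [map_add, ContinuousLinearMap.map_smul]
        rfl
      have h1 := hcon z hz d
      rw [hMd] at h1
      simp only [Pi.add_apply, Pi.smul_apply, smul_eq_mul] at h1
      rcases lt_or_ge (d0 * w1 0 + d1 * w2 0) (d0 * w1 1 + d1 * w2 1) with hA | hA
      · have := h1 hA
        nlinarith [hcontra.2, this]
      · nlinarith [hcontra.1, hA]
    obtain ⟨a, b, ha, hb, hab, he1, he2⟩ := farkas2 _ _ _ _ hfark
    set l : Fin 3 → ℝ := ![-(a+b), a, b] with hldef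
    have hlw1 : dot3 l w1 = 0 := by
      rw [dot3_expand]
      simp only [hldef, Matrix.cons_val_zero, Matrix.cons_val_one, Matrix.head_cons,
        Matrix.cons_val_two, Matrix.tail_cons]
      linear_combination he1
    have hlw2 : dot3 l w2 = 0 := by
      rw [dot3_expand]
      simp only [hldef, Matrix.cons_val_zero, Matrix.cons_val_one, Matrix.head_cons,
        Matrix.cons_val_two, Matrix.tail_cons]
      linear_combination he2
    have hqw1 : dot3 q w1 = 0 := crit hSP hd hz e20
    have hqw2 : dot3 q w2 = 0 := crit hSP hd hz e21
    -- cross product c := l × q is nonzero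
    set c := cross3 l q with hcdef
    have hqpos : ∀ i, 0 < q i := hz
    have hcne : dot3 c c ≠ 0 := by
      have hcc : 0 ≤ dot3 c c := by rw [dot3_expand]; nlinarith [sq_nonneg (c 0), sq_nonneg (c 1), sq_nonneg (c 2)]
      rcases lt_or_ge 0 a with hapos | hale
      · -- c 2 = l 0 * q 1 - l 1 * q 0 < 0
        have hc2 : c 2 = -(a+b) * q 1 - a * q 0 := by
          simp [hcdef, cross3, hldef]
        have hc2neg : c 2 < 0 := by
          rw [hc2]
          nlinarith [hqpos 0, hqpos 1]
        intro hcon2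
        rw [dot3_expand] at hcon2
        nlinarith [sq_nonneg (c 0), sq_nonneg (c 1), sq_nonneg (c 2), hc2neg]
      · have ha0 : a = 0 := le_antisymm hale ha
        have hbpos : 0 < b := by
          rcases lt_or_ge 0 b with h | h
          · exact h
          · exact absurd ⟨ha0, le_antisymm h hb⟩ hab
        have hc1 : c 1 = b * q 0 + (a+b) * q 2 := by
          simp [hcdef, cross3, hldef]; ring
        have hc1pos : 0 < c 1 := by
          rw [hc1, ha0]
          nlinarith [hqpos 0, hqpos 2]
        intro hcon2
        rw [dot3_expand] at hcon2
        nlinarith [sq_nonneg (c 0), sq_nonneg (c 1), sq_nonneg (c 2), hc1pos]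
    -- w1, w2 parallel to c
    have hp1 := parallel_of_orth hlw1 hqw1
    have hp2 := parallel_of_orth hlw2 hqw2
    rw [← hcdef] at hp1 hp2
    have hw1c : w1 = ((dot3 w1 c) / (dot3 c c)) • c := by
      funext i
      have hi := congrFun hp1 i
      simp only [Pi.smul_apply, smul_eq_mul] at hi ⊢
      field_simp
      linear_combination hi
    have hw2c : w2 = ((dot3 w2 c) / (dot3 c c)) • c := by
      funext i
      have hi := congrFun hp2 i
      simp only [Pi.smul_apply, smul_eq_mul] at hi ⊢
      field_simp
      linear_combination hi
    -- compute entries and determinant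
    have hA1 : (Lclm.comp (f'.comp T2clm)) e20 = Lclm w1 := by
      simp only [ContinuousLinearMap.comp_apply, hw1def]
    have hA2 : (Lclm.comp (f'.comp T2clm)) e21 = Lclm w2 := by
      simp only [ContinuousLinearMap.comp_apply, hw2def]
    apply det_eq_zero_of_parallel w1 w2 c _ _ ?h1 ?h2 hw1c hw2c
    case h1 => rw [hA1]; exact ⟨by simp, by simp⟩
    case h2 => rw [hA2]; exact ⟨by simp, by simp⟩
  -- Sard: image has measure zero
  have hnull : volume (Fmap S '' Om) = 0 := by
    apply addHaar_image_eq_zero_of_det_fderivWithin_eq_zero volume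
      (fun z hz => hasFDerivWithinAt_Fmap hd hz) hsing
  obtain ⟨ρ, hρ, pt, hsub⟩ := ball_sub_image hSP hcont hd
  have hpos := Metric.measure_ball_pos volume pt hρ
  have : volume (Metric.ball pt ρ) ≤ 0 := hnull ▸ measure_mono hsub
  exact absurd (le_antisymm this zero_le) (ne_of_gt hpos)
end A7
section A8
variable {S : (Fin 3 → ℝ) → Fin 3 → ℝ}


lemma config_lemma (hSP : StrictlyProper3 S) (hd : DifferentiableOn ℝ S relint3)
    (hBCT : BCT3 S) {z : Fin 2 → ℝ} (hz : z ∈ Om) {d : Fin 2 → ℝ}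
    (hw1 : fderivWithin ℝ S relint3 (Tmap z) (T2clm d) 0 <
      fderivWithin ℝ S relint3 (Tmap z) (T2clm d) 1)
    (hw2 : fderivWithin ℝ S relint3 (Tmap z) (T2clm d) 0 <
      fderivWithin ℝ S relint3 (Tmap z) (T2clm d) 2) :
    ∃ ε > 0, ∀ s : ℝ, 0 < s → s < ε →
      (∀ i, 0 < (Tmap z + s • T2clm d) i) ∧
      (Tmap z + s • T2clm d) ∈ simplex3 ∧
      (Tmap z - s • T2clm d) ∈ simplex3 ∧
      0 < S (Tmap z - s • T2clm d) 0 - S (Tmap z) 0 ∧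
      Tmap z = (1/2 : ℝ) • (Tmap z + s • T2clm d) + (1/2 : ℝ) • (Tmap z - s • T2clm d) ∧
      (∀ q'' ∈ simplex3,
        nb3 S (Tmap z - s • T2clm d) q'' ≤ S (Tmap z - s • T2clm d) 0 - S (Tmap z) 0 →
        dot3 (Tmap z + s • T2clm d) (S q'') ≤ dot3 (Tmap z + s • T2clm d) (S (Tmap z))) ∧
      S (Tmap z - s • T2clm d) 1 - S (Tmap z) 1 < S (Tmap z - s • T2clm d) 0 - S (Tmap z) 0 ∧
      S (Tmap z - s • T2clm d) 2 - S (Tmap z) 2 < S (Tmap z - s • T2clm d) 0 - S (Tmap z) 0 := by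
  set q := Tmap z with hqdef
  set δ := T2clm d with hδdef
  set w := fderivWithin ℝ S relint3 q δ with hwdef
  have hqpos : ∀ i, 0 < q i := hz
  have hqsum : ∑ i, q i = 1 := Tmap_sum z
  -- w 0 < 0
  have hcrit0 : dot3 q w = 0 := crit hSP hd hz d
  have hw0neg : w 0 < 0 := by
    rw [dot3_expand] at hcrit0
    nlinarith [hqpos 0, hqpos 1, hqpos 2, hqsum, Fin.sum_univ_three (f := fun i => q i),
      mul_lt_mul_of_pos_left hw1 (hqpos 1), mul_lt_mul_of_pos_left hw2 (hqpos 2)]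
  -- line equalities
  have hTline : ∀ τ : ℝ, Tmap (z + τ • d) = q + τ • δ := by
    intro τ; rw [Tmap_add]; rw [hqdef, hδdef]; congr 1; exact map_smul T2clm τ d
  have hTline' : ∀ τ : ℝ, Tmap (z + τ • (-d)) = q - τ • δ := by
    intro τ
    rw [Tmap_add, map_smul, map_neg, smul_neg, hqdef, hδdef, ← sub_eq_add_neg]
  -- derivative facts
  have hvec : HasDerivAt (fun τ : ℝ => S (Tmap (z + τ • d))) (w) 0 := by
    rw [hwdef, hδdef]; exact hasDerivAt_S_line hd hz d
  have hvecneg : HasDerivAt (fun τ : ℝ => S (Tmap (z + τ • (-d)))) (-w) 0 := by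
    have := hasDerivAt_S_line hd hz (-d)
    have hmap : T2clm (-d) = -δ := by rw [map_neg, hδdef]
    rw [hmap, map_neg] at this
    exact this
  have hproj : ∀ i : Fin 3, HasDerivAt (fun τ : ℝ => S (Tmap (z + τ • d)) i) (w i) 0 :=
    fun i => (ContinuousLinearMap.proj (R := ℝ) (φ := fun _ : Fin 3 => ℝ) i).hasFDerivAt.comp_hasDerivAt 0 hvec
  have hprojneg : ∀ i : Fin 3, HasDerivAt (fun τ : ℝ => S (Tmap (z + τ • (-d))) i) (-(w i)) 0 := by
    intro i
    have := (ContinuousLinearMap.proj (R := ℝ) (φ := fun _ : Fin 3 => ℝ) i).hasFDerivAt.comp_hasDerivAt 0 hvecneg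
    exact this
  -- one-sided inequalities
  obtain ⟨εA, hεA, hA⟩ := deriv_pos_right (by simpa using (hproj 0).neg) (by linarith : (0:ℝ) < -(w 0))
  obtain ⟨εB, hεB, hB⟩ := deriv_pos_right (hprojneg 0) (by linarith : (0:ℝ) < -(w 0))
  obtain ⟨εC, hεC, hC⟩ := deriv_pos_right ((hprojneg 0).sub (hprojneg 1))
    (by simp only [neg_sub_neg]; linarith : (0:ℝ) < -(w 0) - -(w 1))
  obtain ⟨εD, hεD, hD⟩ := deriv_pos_right ((hprojneg 0).sub (hprojneg 2))
    (by simp only [neg_sub_neg]; linarith : (0:ℝ) < -(w 0) - -(w 2))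
  obtain ⟨εE, hεE, hE⟩ := line_mem hz d
  obtain ⟨εF, hεF, hF⟩ := line_mem hz (-d)
  refine ⟨min (min εA εB) (min (min εC εD) (min εE εF)), by positivity, fun s hs hslt => ?_⟩
  have hsA : s < εA := lt_of_lt_of_le hslt (le_trans (min_le_left _ _) (min_le_left _ _))
  have hsB : s < εB := lt_of_lt_of_le hslt (le_trans (min_le_left _ _) (min_le_right _ _))
  have hsC : s < εC := lt_of_lt_of_le hslt
    (le_trans (min_le_right _ _) (le_trans (min_le_left _ _) (min_le_left _ _)))
  have hsD : s < εD := lt_of_lt_of_le hslt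
    (le_trans (min_le_right _ _) (le_trans (min_le_left _ _) (min_le_right _ _)))
  have hsE : s < εE := lt_of_lt_of_le hslt
    (le_trans (min_le_right _ _) (le_trans (min_le_right _ _) (min_le_left _ _)))
  have hsF : s < εF := lt_of_lt_of_le hslt
    (le_trans (min_le_right _ _) (le_trans (min_le_right _ _) (min_le_right _ _)))
  -- memberships
  have hpOm : z + s • d ∈ Om := hE s (by rw [abs_of_pos hs]; exact hsE)
  have hq0Om : z + s • (-d) ∈ Om := hF s (by rw [abs_of_pos hs]; exact hsF)
  have hppos : ∀ i, 0 < (q + s • δ) i := by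
    rw [← hTline s]; exact hpOm
  have hpmem : (q + s • δ) ∈ simplex3 := by
    rw [← hTline s]; exact relint3_subset (Tmap_mem_relint hpOm)
  have hq0mem : (q - s • δ) ∈ simplex3 := by
    rw [← hTline' s]; exact relint3_subset (Tmap_mem_relint hq0Om)
  -- basic inequalities from one-sided lemmas
  have hb' : S q 0 < S (q - s • δ) 0 := by
    have := hB s hs hsB
    rw [hTline' s] at this
    simpa [show z + (0:ℝ) • (-d) = z by simp, hqdef] using this
  have hBB : ∀ τ : ℝ, 0 < τ → τ < εA → S (q + τ • δ) 0 < S q 0 := by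
    intro τ hτ hτlt
    have := hA τ hτ hτlt
    simp only [Pi.neg_apply] at this
    rw [hTline τ] at this
    simp only [show z + (0:ℝ) • d = z by simp] at this
    have h9 : -S (Tmap z) 0 < -S (q + τ • δ) 0 := by
      simpa using this
    rw [hqdef]
    linarith
  have hC1 : S (q - s • δ) 1 - S q 1 < S (q - s • δ) 0 - S q 0 := by
    have := hC s hs hsC
    simp only [Pi.sub_apply] at this
    rw [hTline' s] at this
    simp only [show z + (0:ℝ) • (-d) = z by simp] at this
    rw [hqdef]
    -- this : S q 0 - S q 1 < S (q-sδ) 0 - S (q-sδ) 1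
    have h9 : S (Tmap z) 0 - S (Tmap z) 1 < S (q - s • δ) 0 - S (q - s • δ) 1 := by
      simpa using this
    linarith
  have hD1 : S (q - s • δ) 2 - S q 2 < S (q - s • δ) 0 - S q 0 := by
    have := hD s hs hsD
    simp only [Pi.sub_apply] at this
    rw [hTline' s] at this
    simp only [show z + (0:ℝ) • (-d) = z by simp] at this
    rw [hqdef]
    have h9 : S (Tmap z) 0 - S (Tmap z) 2 < S (q - s • δ) 0 - S (q - s • δ) 2 := by
      simpa using this
    linarith
  set p := q + s • δ with hpdef
  set q0 := q - s • δ with hq0def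
  set b := S q0 0 - S q 0 with hbdef
  have hbpos : 0 < b := by rw [hbdef]; linarith
  -- midpoint equality
  have hpt : (1/2 : ℝ) • p + (1 - (1/2 : ℝ)) • q0 = q := by
    funext i
    simp only [hpdef, hq0def, Pi.add_apply, Pi.smul_apply, Pi.sub_apply, smul_eq_mul]
    ring
  have hpt2 : q = (1/2 : ℝ) • p + (1/2 : ℝ) • q0 := by
    rw [← hpt]; norm_num
  -- nb3 of q from q0 equals b
  have hnbq : nb3 S q0 q = b := by
    have hrfl : nb3 S q0 q = max (S q0 0 - S q 0) (max (S q0 1 - S q 1) (S q0 2 - S q 2)) := rfl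
    rw [hrfl, hbdef]
    exact max_eq_left (max_le (by linarith) (by linarith))
  -- BCT application
  have hqmem : q ∈ simplex3 := relint3_subset (Tmap_mem_relint hz)
  obtain ⟨α, ⟨hαmem, hαub⟩, hmax⟩ := hBCT p hpmem q0 hq0mem b hbpos
  have hhalf_mem : (1/2 : ℝ) ∈ {a : ℝ | a ∈ Set.Icc (0:ℝ) 1 ∧
      nb3 S q0 (a • p + (1 - a) • q0) ≤ b} := by
    constructor
    · constructor <;> norm_num
    · rw [hpt, hnbq]
  have hαge : (1/2 : ℝ) ≤ α := hαub hhalf_mem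
  have hαle : α ≤ (1/2 : ℝ) := by
    by_contra hcon
    push_neg at hcon
    have hα1 : α ≤ 1 := hαmem.1.2
    set τ := (2 * α - 1) * s with hτdef
    have hτpos : 0 < τ := by
      rw [hτdef]; nlinarith
    have hτles : τ ≤ s := by
      rw [hτdef]; nlinarith
    have hptα : α • p + (1 - α) • q0 = q + τ • δ := by
      funext i
      simp only [hpdef, hq0def, hτdef, Pi.add_apply, Pi.smul_apply, Pi.sub_apply, smul_eq_mul]
      ring
    have hfeas := hαmem.2
    rw [hptα] at hfeas
    have hlt : b < nb3 S q0 (q + τ • δ) := by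
      have hS0 : S (q + τ • δ) 0 < S q 0 := hBB τ hτpos (lt_of_le_of_lt hτles hsA)
      have : b < S q0 0 - S (q + τ • δ) 0 := by rw [hbdef]; linarith
      exact lt_of_lt_of_le this (le_max_left _ _)
    linarith
  have hαeq : α = (1/2 : ℝ) := le_antisymm hαle hαge
  -- maximizer property
  have hmaxfinal : ∀ q'' ∈ simplex3, nb3 S q0 q'' ≤ b →
      dot3 p (S q'') ≤ dot3 p (S q) := by
    intro q'' hq''mem hq''feas
    by_cases hq''eq : q'' = q
    · rw [hq''eq]
    · have := hmax q'' hq''mem hq''feas (by rw [hαeq, hpt]; exact hq''eq)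
      rw [hαeq, hpt] at this
      exact this.le
  exact ⟨hppos, hpmem, hq0mem, hbpos, hpt2, hmaxfinal, hC1, hD1⟩
end A8

end Stmt2Aux

/-- Lemma `construction`: if `S` is a strictly proper scoring rule satisfying the
technical assumptions and the budget-constrained truthfulness property, then there exist
distributions `p, q, q₀, p', q₀' ∈ Δ` and budgets `b, b' > 0` such that:
(1) `q = ½p + ½q₀`, `q` maximizes `p·S(·)` over `{q'' ∈ Δ : nb(q₀, q'') ≤ b}`,
    `S_X(q₀) − S_X(q) = b`, `S_Y(q₀) − S_Y(q) < b`, and `S_Z(q₀) − S_Z(q) < b`;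
(2) `q = ½p' + ½q₀'`, `q` maximizes `p'·S(·)` over `{q'' ∈ Δ : nb(q₀', q'') ≤ b'}`,
    `S_X(q₀') − S_X(q) = b'`, `S_Y(q₀') − S_Y(q) < b'`, and `S_Z(q₀') − S_Z(q) < b'`;
(3) `p_Y / p_Z ≠ p'_Y / p'_Z`. -/
theorem stmt2 (S : (Fin 3 → ℝ) → Fin 3 → ℝ)
    (hSP : StrictlyProper3 S) (hTech : Tech3 S) (hBCT : BCT3 S) :
    ∃ p q q₀ p' q₀' : Fin 3 → ℝ, ∃ b b' : ℝ,
      p ∈ simplex3 ∧ q ∈ simplex3 ∧ q₀ ∈ simplex3 ∧ p' ∈ simplex3 ∧ q₀' ∈ simplex3 ∧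
      0 < b ∧ 0 < b' ∧
      -- (1)
      q = (1/2 : ℝ) • p + (1/2 : ℝ) • q₀ ∧
      (∀ q'' ∈ simplex3, nb3 S q₀ q'' ≤ b → dot3 p (S q'') ≤ dot3 p (S q)) ∧
      S q₀ 0 - S q 0 = b ∧ S q₀ 1 - S q 1 < b ∧ S q₀ 2 - S q 2 < b ∧
      -- (2)
      q = (1/2 : ℝ) • p' + (1/2 : ℝ) • q₀' ∧
      (∀ q'' ∈ simplex3, nb3 S q₀' q'' ≤ b' → dot3 p' (S q'') ≤ dot3 p' (S q)) ∧
      S q₀' 0 - S q 0 = b' ∧ S q₀' 1 - S q 1 < b' ∧ S q₀' 2 - S q 2 < b' ∧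
      -- (3)
      p 1 / p 2 ≠ p' 1 / p' 2 := by
  obtain ⟨hcont, hdiff, _⟩ := hTech
  obtain ⟨z, hz, d, hw1, hw2⟩ := exists_cone hSP hcont hdiff
  set q := Tmap z with hqdef
  set f' := fderivWithin ℝ S relint3 q with hf'def
  set w := f' (T2clm d) with hwdef
  set wk := f' (T2clm e21) with hwkdef
  -- perturbed direction
  set ε' := min ((w 1 - w 0) / (2 * (|wk 1 - wk 0| + 1)))
    ((w 2 - w 0) / (2 * (|wk 2 - wk 0| + 1))) with hε'def
  have hε'pos : 0 < ε' := by
    apply lt_min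
    · apply div_pos (by linarith) (by positivity)
    · apply div_pos (by linarith) (by positivity)
  set d' := d + ε' • e21 with hd'def
  have hw' : f' (T2clm d') = w + ε' • wk := by
    rw [hd'def, map_add, ContinuousLinearMap.map_smul, map_add, ContinuousLinearMap.map_smul]
  have hw'0 : f' (T2clm d') 0 = w 0 + ε' * wk 0 := by rw [hw']; simp
  have hw'1 : f' (T2clm d') 1 = w 1 + ε' * wk 1 := by rw [hw']; simp
  have hw'2 : f' (T2clm d') 2 = w 2 + ε' * wk 2 := by rw [hw']; simp
  have hw1' : f' (T2clm d') 0 < f' (T2clm d') 1 := by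
    rw [hw'0, hw'1]
    have hle : ε' ≤ (w 1 - w 0) / (2 * (|wk 1 - wk 0| + 1)) := min_le_left _ _
    have habs : -(|wk 1 - wk 0|) ≤ wk 1 - wk 0 := neg_abs_le _
    have hA : (0:ℝ) ≤ |wk 1 - wk 0| := abs_nonneg _
    have hkey : ε' * (|wk 1 - wk 0| + 1) ≤ (w 1 - w 0) / 2 := by
      have hApos : (0:ℝ) < |wk 1 - wk 0| + 1 := by positivity
      have h2 := mul_le_mul_of_nonneg_right hle hApos.le
      have h3 : (w 1 - w 0) / (2 * (|wk 1 - wk 0| + 1)) * (|wk 1 - wk 0| + 1)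
          = (w 1 - w 0) / 2 := by
        field_simp
      linarith
    nlinarith [mul_le_mul_of_nonneg_left habs hε'pos.le]
  have hw2' : f' (T2clm d') 0 < f' (T2clm d') 2 := by
    rw [hw'0, hw'2]
    have hle : ε' ≤ (w 2 - w 0) / (2 * (|wk 2 - wk 0| + 1)) := min_le_right _ _
    have habs : -(|wk 2 - wk 0|) ≤ wk 2 - wk 0 := neg_abs_le _
    have hA : (0:ℝ) ≤ |wk 2 - wk 0| := abs_nonneg _
    have hkey : ε' * (|wk 2 - wk 0| + 1) ≤ (w 2 - w 0) / 2 := by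
      have hApos : (0:ℝ) < |wk 2 - wk 0| + 1 := by positivity
      have h2 := mul_le_mul_of_nonneg_right hle hApos.le
      have h3 : (w 2 - w 0) / (2 * (|wk 2 - wk 0| + 1)) * (|wk 2 - wk 0| + 1)
          = (w 2 - w 0) / 2 := by
        field_simp
      linarith
    nlinarith [mul_le_mul_of_nonneg_left habs hε'pos.le]
  -- apply config lemma twice
  obtain ⟨ε1, hε1, H1⟩ := config_lemma hSP hdiff hBCT hz (d := d) hw1 hw2
  obtain ⟨ε2, hε2, H2⟩ := config_lemma hSP hdiff hBCT hz (d := d') hw1' hw2'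
  set s := min ε1 ε2 / 2 with hsdef
  have hspos : 0 < s := by positivity
  have hmin : 0 < min ε1 ε2 := lt_min hε1 hε2
  have hs1 : s < ε1 :=
    lt_of_lt_of_le (by rw [hsdef]; exact half_lt_self hmin) (min_le_left _ _)
  have hs2 : s < ε2 :=
    lt_of_lt_of_le (by rw [hsdef]; exact half_lt_self hmin) (min_le_right _ _)
  obtain ⟨h1pos, h1p, h1q0, h1b, h1mid, h1max, h1c1, h1c2⟩ := H1 s hspos hs1
  obtain ⟨h2pos, h2p, h2q0, h2b, h2mid, h2max, h2c1, h2c2⟩ := H2 s hspos hs2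
  have hqmem : q ∈ simplex3 := relint3_subset (Tmap_mem_relint hz)
  refine ⟨q + s • T2clm d, q, q - s • T2clm d, q + s • T2clm d', q - s • T2clm d',
    S (q - s • T2clm d) 0 - S q 0, S (q - s • T2clm d') 0 - S q 0,
    h1p, hqmem, h1q0, h2p, h2q0, h1b, h2b, h1mid, h1max, rfl, h1c1, h1c2,
    h2mid, h2max, rfl, h2c1, h2c2, ?_⟩
  -- ratio inequality
  have hTe21 : T2clm e21 = ![0, 1, -1] := by
    funext i; fin_cases i <;> simp [e21]
  have hδ' : T2clm d' = T2clm d + ε' • ![0, 1, -1] := by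
    rw [hd'def, map_add, ContinuousLinearMap.map_smul, hTe21]
  have hp'1 : (q + s • T2clm d') 1 = (q + s • T2clm d) 1 + s * ε' := by
    rw [hδ']
    simp [Pi.add_apply, Pi.smul_apply]
    ring
  have hp'2 : (q + s • T2clm d') 2 = (q + s • T2clm d) 2 - s * ε' := by
    rw [hδ']
    simp [Pi.add_apply, Pi.smul_apply]
    ring
  have hp1pos : 0 < (q + s • T2clm d) 1 := h1pos 1
  have hp2pos : 0 < (q + s • T2clm d) 2 := h1pos 2
  have hp'2pos : 0 < (q + s • T2clm d') 2 := h2pos 2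
  intro hcon
  rw [div_eq_div_iff (ne_of_gt hp2pos) (ne_of_gt hp'2pos)] at hcon
  rw [hp'1, hp'2] at hcon
  nlinarith [mul_pos hspos hε'pos, hp1pos, hp2pos]
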